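/- Let S be a nonempty finite set of points in ℝ^d with center of mass c(S). Then the average, over choices of a center z drawn uniformly from S, of the cost ∑_{x∈S} ‖x − z‖² equals twice the optimal cost: (1/|S|) ∑_{z∈S} ∑_{x∈S} ‖x − z‖² = 2 ∑_{x∈S} ‖x − c(S)‖². (This identity underlies the analysis of the first, uniformly random, center chosen by k-means++.) -/

import Mathlib

/-- The centroid (center of mass) of a finite set of points in `ℝ^d`. -/
noncomputable def centroid {d : ℕ} (S : Finset (EuclideanSpace ℝ (Fin d))) :
    EuclideanSpace ℝ (Fin d) :=
  ((S.card : ℝ)⁻¹) • ∑ x ∈ S, x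

lemma sum_sub_centroid {d : ℕ} (S : Finset (EuclideanSpace ℝ (Fin d))) (hS : S.Nonempty) :
    ∑ x ∈ S, (x - centroid S) = 0 := by
  have hn : (S.card : ℝ) ≠ 0 := Nat.cast_ne_zero.mpr (Finset.card_pos.mpr hS).ne'
  rw [Finset.sum_sub_distrib, Finset.sum_const, centroid, ← Nat.cast_smul_eq_nsmul ℝ, smul_smul,
    mul_inv_cancel₀ hn, one_smul, sub_self]

lemma parallel_axis {d : ℕ} (S : Finset (EuclideanSpace ℝ (Fin d))) (hS : S.Nonempty)
    (z : EuclideanSpace ℝ (Fin d)) :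
    ∑ x ∈ S, ‖x - z‖ ^ 2
      = ∑ x ∈ S, ‖x - centroid S‖ ^ 2 + S.card * ‖centroid S - z‖ ^ 2 := by
  have h : ∀ x ∈ S, ‖x - z‖ ^ 2
      = ‖x - centroid S‖ ^ 2 + 2 * inner ℝ (x - centroid S) (centroid S - z)
        + ‖centroid S - z‖ ^ 2 := by
    intro x _
    have : x - z = (x - centroid S) + (centroid S - z) := by abel
    rw [this, @norm_add_sq_real]
  rw [Finset.sum_congr rfl h]
  rw [Finset.sum_add_distrib, Finset.sum_add_distrib, Finset.sum_const, nsmul_eq_mul]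
  have : ∑ x ∈ S, 2 * (inner ℝ (x - centroid S) (centroid S - z) : ℝ) = 0 := by
    rw [← Finset.mul_sum, ← sum_inner, sum_sub_centroid S hS, inner_zero_left, mul_zero]
  rw [this, add_zero]

/-- The average, over a center `z` drawn uniformly from a nonempty finite set
`S ⊂ ℝ^d`, of the cost `∑_{x∈S} ‖x − z‖²` equals twice the optimal cost:
`(1/|S|) ∑_{z∈S} ∑_{x∈S} ‖x − z‖² = 2 ∑_{x∈S} ‖x − c(S)‖²`. -/
theorem avg_sum_sq_dist_eq_two_mul_optimal {d : ℕ}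
    (S : Finset (EuclideanSpace ℝ (Fin d))) (hS : S.Nonempty) :
    ((S.card : ℝ)⁻¹) * ∑ z ∈ S, ∑ x ∈ S, ‖x - z‖ ^ 2
      = 2 * ∑ x ∈ S, ‖x - centroid S‖ ^ 2 := by
  have hn : (S.card : ℝ) ≠ 0 := Nat.cast_ne_zero.mpr (Finset.card_pos.mpr hS).ne'
  have h1 : ∑ z ∈ S, ∑ x ∈ S, ‖x - z‖ ^ 2
      = S.card * ∑ x ∈ S, ‖x - centroid S‖ ^ 2
        + S.card * ∑ z ∈ S, ‖centroid S - z‖ ^ 2 := by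
    rw [Finset.sum_congr rfl fun z _ => parallel_axis S hS z, Finset.sum_add_distrib,
      Finset.sum_const, nsmul_eq_mul, ← Finset.mul_sum]
  have h2 : ∑ z ∈ S, ‖centroid S - z‖ ^ 2 = ∑ x ∈ S, ‖x - centroid S‖ ^ 2 := by
    exact Finset.sum_congr rfl fun z _ => by rw [← norm_neg, neg_sub]
  rw [h1, h2]
  field_simp
  ring
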